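/- arXiv:1503.04093 — 2 statements merged into one kernel-verified Lean document; each statement's English description precedes it below -/
import Mathlib

section
/- Under the strict-feasibility assumption (there exists a Borel probability measure F on X with ∫ g_i dF < ε_i for every i = 1,…,n), the robust planning value P*(ε) = sup_{b ∈ B} inf_{F ∈ 𝓕(ε)} ∫_X J(x,b) dF(x) equals the optimal value of the dual program: sup { −∑_{i=1}^n λ_i ε_i − η : b ∈ B, λ ∈ ℝ₊ⁿ, η ∈ ℝ, and J(x,b) + ∑_{i=1}^n λ_i g_i(x) + η ≥ 0 for all x ∈ X }. -/
open MeasureTheory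

/-- Strong duality for the robust planning problem under strict feasibility. -/
theorem robust_planning_strong_duality
    (X : Set ℝ) (hXne : X.Nonempty) (hXcpt : IsCompact X)
    (B : Set ℝ) (hBne : B.Nonempty) (hBconv : Convex ℝ B)
    (J : ℝ → ℝ → ℝ)
    (hJcont : ContinuousOn (fun p : ℝ × ℝ => J p.1 p.2) (X ×ˢ B))
    (hJconc_b : ∀ x ∈ X, ConcaveOn ℝ B (fun b => J x b))
    (hJconc_x : ∀ b ∈ B, ConcaveOn ℝ X (fun x => J x b))
    (n : ℕ) (g : Fin n → ℝ → ℝ) (hg : ∀ i, ContinuousOn (g i) X)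
    (ε : Fin n → ℝ)
    (hstrict : ∃ F : Measure X, IsProbabilityMeasure F ∧
      ∀ i, (∫ x, g i (x : ℝ) ∂F) < ε i) :
    (⨆ b : B, ⨅ F : {F : Measure X // IsProbabilityMeasure F ∧
        ∀ i, (∫ x, g i (x : ℝ) ∂F) ≤ ε i}, ∫ x, J (x : ℝ) (b : ℝ) ∂F.1) =
    sSup {v : ℝ | ∃ b ∈ B, ∃ lam : Fin n → ℝ, ∃ η : ℝ,
      (∀ i, 0 ≤ lam i) ∧
      (∀ x ∈ X, 0 ≤ J x b + (∑ i, lam i * g i x) + η) ∧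
      v = -(∑ i, lam i * ε i) - η} := by
  classical
  haveI hXcs : CompactSpace X := isCompact_iff_compactSpace.mp hXcpt
  haveI hXneI : Nonempty X := hXne.to_subtype
  haveI hBneI : Nonempty B := hBne.to_subtype
  obtain ⟨F₀, hF₀p, hF₀⟩ := hstrict
  -- integrability of continuous functions on the compact space X
  have hInt : ∀ (μ : Measure X), IsFiniteMeasure μ → ∀ f : X → ℝ, Continuous f →
      Integrable f μ := by
    intro μ hμ f hf
    exact hf.integrable_of_hasCompactSupport (HasCompactSupport.of_compactSpace f)
  have hgc : ∀ i, Continuous fun x : X => g i (x : ℝ) := fun i => (hg i).restrict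
  have hJcOn : ∀ b : B, ContinuousOn (fun x : ℝ => J x (b : ℝ)) X := by
    intro b
    exact hJcont.comp ((continuous_id.prodMk continuous_const).continuousOn)
      (fun x hx => Set.mk_mem_prod hx b.2)
  have hJc : ∀ b : B, Continuous fun x : X => J (x : ℝ) (b : ℝ) := fun b => (hJcOn b).restrict
  set Ib : B → ℝ := fun b => ⨅ F : {F : Measure X // IsProbabilityMeasure F ∧
        ∀ i, (∫ x, g i (x : ℝ) ∂F) ≤ ε i}, ∫ x, J (x : ℝ) (b : ℝ) ∂F.1 with hIbdef
  set T : Set ℝ := {v : ℝ | ∃ b ∈ B, ∃ lam : Fin n → ℝ, ∃ η : ℝ,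
      (∀ i, 0 ≤ lam i) ∧
      (∀ x ∈ X, 0 ≤ J x b + (∑ i, lam i * g i x) + η) ∧
      v = -(∑ i, lam i * ε i) - η} with hTdef
  haveI hFne : Nonempty {F : Measure X // IsProbabilityMeasure F ∧
      ∀ i, (∫ x, g i (x : ℝ) ∂F) ≤ ε i} := ⟨⟨F₀, hF₀p, fun i => (hF₀ i).le⟩⟩
  -- lower bound for the inner infimum
  have hbb : ∀ b : B, BddBelow (Set.range fun F : {F : Measure X // IsProbabilityMeasure F ∧
      ∀ i, (∫ x, g i (x : ℝ) ∂F) ≤ ε i} => ∫ x, J (x : ℝ) (b : ℝ) ∂F.1) := by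
    intro b
    obtain ⟨x₀, hx₀, hmin⟩ := hXcpt.exists_isMinOn hXne (hJcOn b)
    refine ⟨J x₀ b, ?_⟩
    rintro _ ⟨F, rfl⟩
    haveI := F.2.1
    calc J x₀ (b : ℝ) = ∫ _x : X, J x₀ (b : ℝ) ∂F.1 := by simp
      _ ≤ ∫ x : X, J (x : ℝ) (b : ℝ) ∂F.1 :=
        integral_mono (integrable_const _) (hInt F.1 inferInstance _ (hJc b))
          (fun x => hmin x.2)
  -- weak duality
  have hwd : ∀ v ∈ T, ∃ b : B, v ≤ Ib b := by
    rintro v ⟨b, hbB, lam, η, hlam, hcon, rfl⟩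
    refine ⟨⟨b, hbB⟩, le_ciInf fun F => ?_⟩
    haveI := F.2.1
    have hIg : ∀ i, Integrable (fun x : X => lam i * g i (x : ℝ)) F.1 := fun i =>
      (hInt F.1 inferInstance _ (hgc i)).const_mul _
    have hintsum : Integrable (fun x : X => ∑ i, lam i * g i (x : ℝ)) F.1 :=
      integrable_finset_sum _ fun i _ => hIg i
    have hns : Integrable (fun x : X => -(∑ i, lam i * g i (x : ℝ))) F.1 := hintsum.neg
    have hcomp : ∫ x : X, (-(∑ i, lam i * g i (x : ℝ)) - η) ∂F.1
        = -(∑ i, lam i * ∫ x : X, g i (x : ℝ) ∂F.1) - η := by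
      rw [integral_sub hns (integrable_const _), integral_neg,
        integral_finset_sum _ fun i _ => hIg i, integral_const]
      simp [measure_univ, integral_const_mul]
    have h1 : -(∑ i, lam i * ε i) - η ≤ ∫ x : X, (-(∑ i, lam i * g i (x : ℝ)) - η) ∂F.1 := by
      rw [hcomp]
      have := Finset.sum_le_sum (fun i (_ : i ∈ Finset.univ) =>
        mul_le_mul_of_nonneg_left (F.2.2 i) (hlam i))
      linarith
    refine h1.trans (integral_mono (hns.sub (integrable_const _))
      (hInt F.1 inferInstance _ (hJc ⟨b, hbB⟩)) fun x => ?_)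
    have := hcon x.1 x.2
    simp only
    linarith
  -- strong duality core
  have hsd : ∀ (b : B) (c : ℝ), c < Ib b → c ∈ T := by
    intro b c hc
    set A : Set ((Fin n → ℝ) × ℝ) := {a | ∃ F : Measure X, IsProbabilityMeasure F ∧
        (∀ i, (∫ x, g i (x : ℝ) ∂F) < a.1 i) ∧ (∫ x, J (x : ℝ) (b : ℝ) ∂F) < a.2} with hAdef
    have hAconv : Convex ℝ A := by
      rintro a₁ ⟨F₁, hF₁p, h₁g, h₁J⟩ a₂ ⟨F₂, hF₂p, h₂g, h₂J⟩ t s ht hs hts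
      rcases ht.lt_or_eq with htpos | hteq
      · rcases hs.lt_or_eq with hspos | hseq
        · haveI := hF₁p; haveI := hF₂p
          set G : Measure X := ENNReal.ofReal t • F₁ + ENNReal.ofReal s • F₂ with hGdef
          haveI h1f : IsFiniteMeasure (ENNReal.ofReal t • F₁ : Measure X) := by
            constructor
            simp [Measure.smul_apply, smul_eq_mul, measure_univ]
          haveI h2f : IsFiniteMeasure (ENNReal.ofReal s • F₂ : Measure X) := by
            constructor
            simp [Measure.smul_apply, smul_eq_mul, measure_univ]
          haveI hGp : IsProbabilityMeasure G := by
            constructor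
            rw [hGdef]
            simp [Measure.smul_apply, smul_eq_mul, measure_univ]
            rw [← ENNReal.ofReal_add ht hs, hts, ENNReal.ofReal_one]
          have hGint : ∀ φ : X → ℝ, Continuous φ →
              ∫ x, φ x ∂G = t * ∫ x, φ x ∂F₁ + s * ∫ x, φ x ∂F₂ := by
            intro φ hφ
            rw [hGdef, integral_add_measure (hInt _ h1f φ hφ) (hInt _ h2f φ hφ),
              integral_smul_measure, integral_smul_measure, ENNReal.toReal_ofReal ht,
              ENNReal.toReal_ofReal hs, smul_eq_mul, smul_eq_mul]
          refine ⟨G, hGp, fun i => ?_, ?_⟩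
          · rw [hGint _ (hgc i)]
            have h' : (t • a₁ + s • a₂).1 i = t * a₁.1 i + s * a₂.1 i := rfl
            rw [h']
            exact add_lt_add (mul_lt_mul_of_pos_left (h₁g i) htpos)
              (mul_lt_mul_of_pos_left (h₂g i) hspos)
          · rw [hGint _ (hJc b)]
            have h' : (t • a₁ + s • a₂).2 = t * a₁.2 + s * a₂.2 := rfl
            rw [h']
            exact add_lt_add (mul_lt_mul_of_pos_left h₁J htpos)
              (mul_lt_mul_of_pos_left h₂J hspos)
        · have htone : t = 1 := by linarith
          subst htone
          rw [← hseq]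
          simpa using ⟨F₁, hF₁p, h₁g, h₁J⟩
      · have hsone : s = 1 := by linarith
        subst hsone
        rw [← hteq]
        simpa using ⟨F₂, hF₂p, h₂g, h₂J⟩
    have hAopen : IsOpen A := by
      rw [isOpen_iff_forall_mem_open]
      rintro a ⟨F, hFp, hFg, hFJ⟩
      refine ⟨{a' : (Fin n → ℝ) × ℝ | (∀ i, (∫ x, g i (x : ℝ) ∂F) < a'.1 i) ∧
          (∫ x, J (x : ℝ) (b : ℝ) ∂F) < a'.2},
        fun a' ha' => ⟨F, hFp, ha'.1, ha'.2⟩, ?_, ⟨hFg, hFJ⟩⟩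
      have h1 : {a' : (Fin n → ℝ) × ℝ | ∀ i, (∫ x, g i (x : ℝ) ∂F) < a'.1 i}
          = ⋂ i, {a' : (Fin n → ℝ) × ℝ | (∫ x, g i (x : ℝ) ∂F) < a'.1 i} := by
        ext a'; simp
      have h2 : IsOpen {a' : (Fin n → ℝ) × ℝ | ∀ i, (∫ x, g i (x : ℝ) ∂F) < a'.1 i} := by
        rw [h1]
        exact isOpen_iInter_of_finite fun i =>
          isOpen_lt continuous_const ((continuous_apply i).comp continuous_fst)
      exact h2.inter (isOpen_lt continuous_const continuous_snd)
    have hpA : ((ε, c) : (Fin n → ℝ) × ℝ) ∉ A := by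
      rintro ⟨F, hFp, hFg, hFJ⟩
      have hFle : Ib b ≤ ∫ x, J (x : ℝ) (b : ℝ) ∂F :=
        ciInf_le (hbb b) ⟨F, hFp, fun i => (hFg i).le⟩
      simp only at hFJ
      linarith
    obtain ⟨f, hf⟩ := geometric_hahn_banach_open_point hAconv hAopen hpA
    -- decomposition of the functional
    have hfdec : ∀ (y : Fin n → ℝ) (r : ℝ),
        f (y, r) = (∑ i, y i * f (Pi.single i 1, 0)) + r * f (0, 1) := by
      intro y r
      have h1 : ((y, r) : (Fin n → ℝ) × ℝ)
          = (∑ i : Fin n, y i • ((Pi.single i 1 : Fin n → ℝ), (0 : ℝ)))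
            + r • ((0 : Fin n → ℝ), (1 : ℝ)) := by
        refine Prod.ext ?_ ?_
        · simp only [Prod.fst_add, Prod.fst_sum, Prod.smul_fst, Prod.smul_snd, smul_zero,
            add_zero]
          ext j
          simp [Pi.single_apply, Finset.sum_ite_eq', mul_comm]
        · simp [Prod.snd_sum]
      rw [h1, map_add, map_sum]
      simp only [_root_.map_smul, smul_eq_mul]
    set lam0 : Fin n → ℝ := fun i => -f (Pi.single i 1, 0) with hlam0def
    set mu : ℝ := -f (0, 1) with hmudef
    have hfval : ∀ (y : Fin n → ℝ) (r : ℝ), f (y, r) = -(∑ i, y i * lam0 i) - r * mu := by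
      intro y r
      rw [hfdec y r]
      have h2 : ∑ i, y i * lam0 i = -∑ i, y i * f (Pi.single i 1, 0) := by
        rw [hlam0def, ← Finset.sum_neg_distrib]
        apply Finset.sum_congr rfl; intro i _; ring
      rw [h2, hmudef]
      ring
    -- padded point membership
    have hmemF : ∀ (F : Measure X), IsProbabilityMeasure F → ∀ δ : ℝ, 0 < δ →
        (((fun i => (∫ x, g i (x : ℝ) ∂F) + δ : Fin n → ℝ),
          (∫ x, J (x : ℝ) (b : ℝ) ∂F) + δ) : (Fin n → ℝ) × ℝ) ∈ A :=
      fun F hFp δ hδ => ⟨F, hFp, fun i => lt_add_of_pos_right _ hδ, lt_add_of_pos_right _ hδ⟩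
    -- key inequality
    have hkey : ∀ (F : Measure X), IsProbabilityMeasure F → ∀ δ : ℝ, 0 < δ →
        (∑ i, ε i * lam0 i) + c * mu <
        (∑ i, (∫ x, g i (x : ℝ) ∂F) * lam0 i) + (∫ x, J (x : ℝ) (b : ℝ) ∂F) * mu
          + δ * ((∑ i, lam0 i) + mu) := by
      intro F hFp δ hδ
      have h := hf _ (hmemF F hFp δ hδ)
      rw [hfval, hfval] at h
      have hexp : ∑ i, ((∫ x, g i (x : ℝ) ∂F) + δ) * lam0 i
          = (∑ i, (∫ x, g i (x : ℝ) ∂F) * lam0 i) + δ * ∑ i, lam0 i := by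
        rw [Finset.mul_sum, ← Finset.sum_add_distrib]
        apply Finset.sum_congr rfl; intro i _; ring
      rw [hexp] at h
      nlinarith [h]
    -- signs of the coefficients
    have hdir : ∀ v : (Fin n → ℝ) × ℝ,
        (∀ a ∈ A, ∀ t : ℝ, 0 ≤ t → a + t • v ∈ A) → f v ≤ 0 := by
      intro v hv
      by_contra h
      push_neg at h
      set a₁ : (Fin n → ℝ) × ℝ := ((fun i => (∫ x, g i (x : ℝ) ∂F₀) + 1),
        (∫ x, J (x : ℝ) (b : ℝ) ∂F₀) + 1) with ha₁def
      have ha₁ : a₁ ∈ A := hmemF F₀ hF₀p 1 one_pos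
      have hc0 : f a₁ < f (ε, c) := hf _ ha₁
      have h2 := hf _ (hv a₁ ha₁ ((f (ε, c) - f a₁) / f v) (div_nonneg (by linarith) h.le))
      rw [f.map_add, f.map_smul, smul_eq_mul, div_mul_cancel₀ _ (ne_of_gt h)] at h2
      linarith
    have hsingle_nonneg : ∀ (i j : Fin n), (0:ℝ) ≤ (Pi.single i (1:ℝ) : Fin n → ℝ) j := by
      intro i j
      rw [Pi.single_apply]
      split_ifs <;> norm_num
    have hlam0 : ∀ i, 0 ≤ lam0 i := by
      intro i
      rw [hlam0def]
      simp only [neg_nonneg]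
      refine hdir _ ?_ |>.trans_eq rfl
      rintro a ⟨F, hFp, hFg, hFJ⟩ t htt
      refine ⟨F, hFp, fun j => ?_, ?_⟩
      · have : (a + t • ((Pi.single i 1 : Fin n → ℝ), (0:ℝ))).1 j
            = a.1 j + t * (Pi.single i 1 : Fin n → ℝ) j := rfl
        rw [this]
        exact lt_of_lt_of_le (hFg j)
          (le_add_of_nonneg_right (mul_nonneg htt (hsingle_nonneg i j)))
      · have : (a + t • ((Pi.single i 1 : Fin n → ℝ), (0:ℝ))).2 = a.2 + t * 0 := rfl
        rw [this, mul_zero, add_zero]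
        exact hFJ
    have hmu0 : 0 ≤ mu := by
      rw [hmudef]
      simp only [neg_nonneg]
      refine hdir _ ?_ |>.trans_eq rfl
      rintro a ⟨F, hFp, hFg, hFJ⟩ t htt
      refine ⟨F, hFp, fun j => ?_, ?_⟩
      · have : (a + t • ((0 : Fin n → ℝ), (1:ℝ))).1 j = a.1 j + t * 0 := rfl
        rw [this, mul_zero, add_zero]
        exact hFg j
      · have : (a + t • ((0 : Fin n → ℝ), (1:ℝ))).2 = a.2 + t * 1 := rfl
        rw [this, mul_one]
        exact lt_of_lt_of_le hFJ (le_add_of_nonneg_right htt)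
    have hS : 0 ≤ ∑ i, lam0 i := Finset.sum_nonneg fun i _ => hlam0 i
    rcases hmu0.lt_or_eq with hmu | hmueq
    · -- mu > 0 : construct the dual certificate
      rw [hTdef]
      refine ⟨(b : ℝ), b.2, fun i => lam0 i / mu, -(∑ i, (lam0 i / mu) * ε i) - c,
        fun i => div_nonneg (hlam0 i) hmu.le, ?_, by ring⟩
      intro x hx
      haveI hdx : IsProbabilityMeasure (Measure.dirac (⟨x, hx⟩ : X)) := by infer_instance
      have h2 : (∑ i, ε i * lam0 i) + c * mu ≤ (∑ i, g i x * lam0 i) + J x b * mu := by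
        refine le_of_forall_pos_lt_add fun δ' hδ' => ?_
        obtain ⟨δd, hδdpos, h5⟩ : ∃ δd : ℝ, 0 < δd ∧ δd * ((∑ i, lam0 i) + mu + 1) = δ' :=
          ⟨δ' / ((∑ i, lam0 i) + mu + 1), div_pos hδ' (by linarith),
            div_mul_cancel₀ _ (by linarith)⟩
        have hk := hkey _ hdx δd hδdpos
        have hgd : ∀ i, (∫ x' : X, g i (x' : ℝ) ∂Measure.dirac ⟨x, hx⟩) = g i x := fun i =>
          integral_dirac _ _
        have hJd : (∫ x' : X, J (x' : ℝ) (b : ℝ) ∂Measure.dirac ⟨x, hx⟩) = J x b :=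
          integral_dirac _ _
        simp only [hgd, hJd] at hk
        have hr : δd * ((∑ i, lam0 i) + mu)
            = δd * ((∑ i, lam0 i) + mu + 1) - δd := by ring
        linarith
      have hSmu : (∑ i, lam0 i / mu * g i x) = (∑ i, g i x * lam0 i) / mu := by
        rw [Finset.sum_div]
        apply Finset.sum_congr rfl; intro i _; ring
      have hSε : (∑ i, lam0 i / mu * ε i) = (∑ i, ε i * lam0 i) / mu := by
        rw [Finset.sum_div]
        apply Finset.sum_congr rfl; intro i _; ring
      rw [hSmu, hSε]
      have h3 : 0 ≤ ((∑ i, g i x * lam0 i) + J x b * mu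
          - ((∑ i, ε i * lam0 i) + c * mu)) / mu := div_nonneg (by linarith) hmu.le
      have h4 : ((∑ i, g i x * lam0 i) + J x b * mu - ((∑ i, ε i * lam0 i) + c * mu)) / mu
          = J x b + (∑ i, g i x * lam0 i) / mu + (-((∑ i, ε i * lam0 i) / mu) - c) := by
        field_simp
        ring
      linarith [h4 ▸ h3]
    · -- mu = 0 : contradiction with strict feasibility
      exfalso
      have hne : ∃ i, 0 < lam0 i := by
        by_contra hno
        push_neg at hno
        have hz : ∀ i, lam0 i = 0 := fun i => le_antisymm (hno i) (hlam0 i)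
        have h1 := hf _ (hmemF F₀ hF₀p 1 one_pos)
        rw [hfval, hfval] at h1
        simp [hz, ← hmueq] at h1
      obtain ⟨i₀, hi₀⟩ := hne
      set D : ℝ := (∑ i, ε i * lam0 i) - (∑ i, (∫ x, g i (x : ℝ) ∂F₀) * lam0 i) with hDdef
      have hDpos : 0 < D := by
        rw [hDdef]
        have : (∑ i, (∫ x, g i (x : ℝ) ∂F₀) * lam0 i) < ∑ i, ε i * lam0 i :=
          Finset.sum_lt_sum (fun i _ => mul_le_mul_of_nonneg_right (hF₀ i).le (hlam0 i))
            ⟨i₀, Finset.mem_univ _, mul_lt_mul_of_pos_right (hF₀ i₀) hi₀⟩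
        linarith
      obtain ⟨δd, hδdpos, h5⟩ : ∃ δd : ℝ, 0 < δd ∧ δd * ((∑ i, lam0 i) + 1) = D :=
        ⟨D / ((∑ i, lam0 i) + 1), div_pos hDpos (by linarith),
          div_mul_cancel₀ _ (by linarith)⟩
      have hk := hkey F₀ hF₀p δd hδdpos
      rw [← hmueq] at hk
      have hr : δd * ((∑ i, lam0 i) + 0) = δd * ((∑ i, lam0 i) + 1) - δd := by ring
      rw [hDdef] at h5
      linarith
  -- assemble
  have hTne : T.Nonempty := by
    obtain ⟨b0, hb0⟩ := hBne
    exact ⟨Ib ⟨b0, hb0⟩ - 1, hsd ⟨b0, hb0⟩ _ (by linarith)⟩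
  by_cases hbd : BddAbove (Set.range Ib)
  · apply le_antisymm
    · refine ciSup_le fun b => ?_
      have hTbdd : BddAbove T := by
        obtain ⟨M, hM⟩ := hbd
        refine ⟨M, fun v hv => ?_⟩
        obtain ⟨b', hb'⟩ := hwd v hv
        exact hb'.trans (hM ⟨b', rfl⟩)
      refine le_of_forall_lt fun c hc => ?_
      obtain ⟨c', hcc', hc'⟩ := exists_between hc
      exact lt_of_lt_of_le hcc' (le_csSup hTbdd (hsd b c' hc'))
    · refine csSup_le hTne fun v hv => ?_
      obtain ⟨b', hb'⟩ := hwd v hv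
      exact hb'.trans (le_ciSup hbd b')
  · rw [Real.iSup_of_not_bddAbove hbd, Real.sSup_of_not_bddAbove ?_]
    rintro ⟨M, hM⟩
    apply hbd
    refine ⟨M, ?_⟩
    rintro _ ⟨b, rfl⟩
    refine le_of_forall_lt fun c hc => ?_
    obtain ⟨c', hcc', hc'⟩ := exists_between hc
    exact lt_of_lt_of_le hcc' (hM (hsd b c' hc'))
end

section
/- (Reduction of the prediction-interval dual program to finitely many constraints.) Let 0 = x_0 < x_1 < ⋯ < x_m = 1 be a partition of [0,1], with intervals I_i = [x_{i−1}, x_i) for i = 1,…,m−1 and I_m = [x_{m−1}, 1]. Then the optimal value of: maximize over b ∈ B, λ̄, λ̲ ∈ ℝ₊^m, η ∈ ℝ of ∑_{i=1}^m ( λ̲_i δ̲_i − λ̄_i δ̄_i ) − η subject to J(x,b) + ∑_{i=1}^m ( λ̄_i − λ̲_i ) 𝟙{I_i}(x) + η ≥ 0 for all x ∈ [0,1], equals the optimal value of the finite program: maximize the same objective over the same variables subject to the 2m constraints J(x_{i−1},b) + λ̄_i − λ̲_i + η ≥ 0 and J(x_i,b) + λ̄_i − λ̲_i + η ≥ 0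 for i = 1,…,m. -/
/-- Reduction of the prediction-interval dual program (with a semi-infinite
constraint over all `x ∈ [0,1]`) to the finite program with the `2m` endpoint constraints:
the two optimal values coincide. -/
theorem prediction_interval_dual_reduction
    (m : ℕ) (hm : 0 < m)
    (B : Set ℝ) (hBne : B.Nonempty) (hBconv : Convex ℝ B)
    (J : ℝ → ℝ → ℝ)
    (hJcont : ContinuousOn (fun p : ℝ × ℝ => J p.1 p.2) (Set.Icc 0 1 ×ˢ B))
    (hJconc_b : ∀ x ∈ Set.Icc (0 : ℝ) 1, ConcaveOn ℝ B (fun b => J x b))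
    (hJconc_x : ∀ b ∈ B, ConcaveOn ℝ (Set.Icc (0 : ℝ) 1) (fun x => J x b))
    (xs : Fin (m + 1) → ℝ) (hmono : StrictMono xs)
    (hx0 : xs 0 = 0) (hxm : xs (Fin.last m) = 1)
    (du dl : Fin m → ℝ)
    (I : Fin m → Set ℝ)
    (hI : ∀ i : Fin m, I i =
      if (i : ℕ) + 1 = m then Set.Icc (xs i.castSucc) (xs i.succ)
      else Set.Ico (xs i.castSucc) (xs i.succ)) :
    sSup {v : ℝ | ∃ b ∈ B, ∃ lu ll : Fin m → ℝ, ∃ η : ℝ,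
      (∀ i, 0 ≤ lu i) ∧ (∀ i, 0 ≤ ll i) ∧
      (∀ x ∈ Set.Icc (0 : ℝ) 1,
        0 ≤ J x b + (∑ i, (lu i - ll i) * (I i).indicator (fun _ => (1 : ℝ)) x) + η) ∧
      v = (∑ i, (ll i * dl i - lu i * du i)) - η} =
    sSup {v : ℝ | ∃ b ∈ B, ∃ lu ll : Fin m → ℝ, ∃ η : ℝ,
      (∀ i, 0 ≤ lu i) ∧ (∀ i, 0 ≤ ll i) ∧
      (∀ i : Fin m,
        0 ≤ J (xs i.castSucc) b + lu i - ll i + η ∧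
        0 ≤ J (xs i.succ) b + lu i - ll i + η) ∧
      v = (∑ i, (ll i * dl i - lu i * du i)) - η} := by
  have hxs0 : ∀ k : Fin (m+1), (0:ℝ) ≤ xs k := fun k => hx0 ▸ hmono.monotone (Fin.zero_le k)
  have hxs1 : ∀ k : Fin (m+1), xs k ≤ 1 := fun k => hxm ▸ hmono.monotone (Fin.le_last k)
  have hac : ∀ i : Fin m, xs i.castSucc < xs i.succ := fun i => hmono (Fin.castSucc_lt_succ : i.castSucc < i.succ)
  have hIsub : ∀ i : Fin m, I i ⊆ Set.Icc (xs i.castSucc) (xs i.succ) := by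
    intro i
    rw [hI i]
    split_ifs
    · exact subset_rfl
    · exact Set.Ico_subset_Icc_self
  -- disjointness: if k < j then I k and I j are disjoint
  have hdisj : ∀ j k : Fin m, k < j → ∀ x : ℝ, x ∈ I k → x ∈ I j → False := by
    intro j k hkj x hxk hxj
    have hkm : (k : ℕ) + 1 ≠ m := by
      have : (k : ℕ) + 1 ≤ (j : ℕ) := hkj
      omega
    rw [hI k, if_neg hkm] at hxk
    have h1 : x < xs k.succ := hxk.2
    have h2 : xs j.castSucc ≤ x := (hIsub j hxj).1
    have h3 : xs k.succ ≤ xs j.castSucc := by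
      apply hmono.monotone
      have : (k.succ : ℕ) ≤ (j.castSucc : ℕ) := by
        simp only [Fin.val_succ, Fin.coe_castSucc]
        exact hkj
      exact this
    linarith
  -- existence and uniqueness of the interval containing x
  have key : ∀ x ∈ Set.Icc (0:ℝ) 1, ∃ j : Fin m, x ∈ I j ∧ ∀ k : Fin m, k ≠ j → x ∉ I k := by
    intro x hx
    have hex : ∃ j : Fin m, x ∈ I j := by
      set S : Finset (Fin m) := Finset.univ.filter (fun i => xs i.castSucc ≤ x) with hS
      have h0S : (⟨0, hm⟩ : Fin m) ∈ S := by
        simp only [hS, Finset.mem_filter, Finset.mem_univ, true_and]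
        have : (⟨0, hm⟩ : Fin m).castSucc = (0 : Fin (m+1)) := rfl
        rw [this, hx0]
        exact hx.1
      set j : Fin m := S.max' ⟨_, h0S⟩ with hj
      have hjS : j ∈ S := S.max'_mem _
      have haj : xs j.castSucc ≤ x := by
        simpa only [hS, Finset.mem_filter, Finset.mem_univ, true_and] using hjS
      refine ⟨j, ?_⟩
      by_cases hjm : (j : ℕ) + 1 = m
      · rw [hI j, if_pos hjm]
        have hsucc : j.succ = Fin.last m := by
          apply Fin.ext
          simp [hjm]
        exact ⟨haj, by rw [hsucc, hxm]; exact hx.2⟩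
      · rw [hI j, if_neg hjm]
        refine ⟨haj, ?_⟩
        by_contra h
        push_neg at h
        have hjlt : (j : ℕ) + 1 < m := lt_of_le_of_ne (Nat.succ_le_of_lt j.isLt) hjm
        set j' : Fin m := ⟨(j : ℕ) + 1, hjlt⟩ with hj'
        have hcs : j'.castSucc = j.succ := by
          apply Fin.ext
          simp [hj']
        have hj'S : j' ∈ S := by
          simp only [hS, Finset.mem_filter, Finset.mem_univ, true_and]
          rw [hcs]; exact h
        have := S.le_max' j' hj'S
        have : (j' : ℕ) ≤ (j : ℕ) := this
        simp [hj'] at this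
    obtain ⟨j, hjI⟩ := hex
    refine ⟨j, hjI, ?_⟩
    intro k hk hxk
    rcases lt_or_gt_of_ne hk with h | h
    · exact hdisj j k h x hxk hjI
    · exact hdisj k j h x hjI hxk
  have huniq : ∀ x ∈ Set.Icc (0:ℝ) 1, ∀ i : Fin m, x ∈ I i → ∀ k : Fin m, k ≠ i → x ∉ I k := by
    intro x hx i hxi k hk
    obtain ⟨j, hj, hu⟩ := key x hx
    have hij : i = j := by
      by_contra h
      exact hu i h hxi
    subst hij
    exact hu k hk
  have hsum : ∀ (lu ll : Fin m → ℝ) (x : ℝ) (j : Fin m), x ∈ I j → (∀ k : Fin m, k ≠ j → x ∉ I k) →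
      (∑ i, (lu i - ll i) * (I i).indicator (fun _ => (1 : ℝ)) x) = lu j - ll j := by
    intro lu ll x j hj hu
    rw [Finset.sum_eq_single j]
    · rw [Set.indicator_of_mem hj, mul_one]
    · intro k _ hk
      rw [Set.indicator_of_notMem (hu k hk), mul_zero]
    · intro h; exact absurd (Finset.mem_univ j) h
  have hcont : ∀ b ∈ B, ContinuousOn (fun x => J x b) (Set.Icc (0:ℝ) 1) := by
    intro b hb
    have h1 : ContinuousOn (fun x : ℝ => ((x, b) : ℝ × ℝ)) (Set.Icc (0:ℝ) 1) :=
      (continuous_id.prodMk continuous_const).continuousOn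
    exact hJcont.comp h1 (fun x hx => Set.mk_mem_prod hx hb)
  congr 1
  ext v
  simp only [Set.mem_setOf_eq]
  constructor
  · rintro ⟨b, hb, lu, ll, η, hlu, hll, hcons, hv⟩
    refine ⟨b, hb, lu, ll, η, hlu, hll, ?_, hv⟩
    intro i
    have ha0 : (0:ℝ) ≤ xs i.castSucc := hxs0 _
    have ha1 : xs i.castSucc ≤ 1 := hxs1 _
    have hc0 : (0:ℝ) ≤ xs i.succ := hxs0 _
    have hc1 : xs i.succ ≤ 1 := hxs1 _
    have haI : xs i.castSucc ∈ I i := by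
      rw [hI i]
      split_ifs
      · exact ⟨le_refl _, (hac i).le⟩
      · exact ⟨le_refl _, hac i⟩
    constructor
    · have h := hcons (xs i.castSucc) ⟨ha0, ha1⟩
      rw [hsum lu ll _ i haI (huniq _ ⟨ha0, ha1⟩ i haI)] at h
      linarith
    · -- continuity at the right endpoint
      have hnn : ∀ x ∈ Set.Ico (xs i.castSucc) (xs i.succ),
          0 ≤ J x b + (lu i - ll i) + η := by
        intro x hx
        have hxIcc : x ∈ Set.Icc (0:ℝ) 1 := ⟨le_trans ha0 hx.1, le_trans hx.2.le hc1⟩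
        have hxI : x ∈ I i := by
          rw [hI i]
          split_ifs
          · exact Set.Ico_subset_Icc_self hx
          · exact hx
        have h := hcons x hxIcc
        rw [hsum lu ll x i hxI (huniq x hxIcc i hxI)] at h
        linarith
      have hcw : ContinuousWithinAt (fun x => J x b + (lu i - ll i) + η)
          (Set.Ico (xs i.castSucc) (xs i.succ)) (xs i.succ) := by
        have h1 : ContinuousWithinAt (fun x => J x b) (Set.Icc (0:ℝ) 1) (xs i.succ) :=
          (hcont b hb) _ ⟨hc0, hc1⟩
        have h2 : ContinuousWithinAt (fun x => J x b + (lu i - ll i) + η)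
            (Set.Icc (0:ℝ) 1) (xs i.succ) :=
          (h1.add continuousWithinAt_const).add continuousWithinAt_const
        exact h2.mono (fun x hx => ⟨le_trans ha0 hx.1, le_trans hx.2.le hc1⟩)
      have hne : (nhdsWithin (xs i.succ) (Set.Ico (xs i.castSucc) (xs i.succ))).NeBot := by
        rw [← mem_closure_iff_nhdsWithin_neBot, closure_Ico (hac i).ne]
        exact ⟨(hac i).le, le_refl _⟩
      have hfin : 0 ≤ J (xs i.succ) b + (lu i - ll i) + η :=
        ge_of_tendsto hcw (eventually_mem_nhdsWithin.mono (fun x hx => hnn x hx))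
      linarith
  · rintro ⟨b, hb, lu, ll, η, hlu, hll, hcons, hv⟩
    refine ⟨b, hb, lu, ll, η, hlu, hll, ?_, hv⟩
    intro x hx
    obtain ⟨j, hxI, hu⟩ := key x hx
    rw [hsum lu ll x j hxI hu]
    have ha0 : (0:ℝ) ≤ xs j.castSucc := hxs0 _
    have ha1 : xs j.castSucc ≤ 1 := hxs1 _
    have hc0 : (0:ℝ) ≤ xs j.succ := hxs0 _
    have hc1 : xs j.succ ≤ 1 := hxs1 _
    have hseg : x ∈ segment ℝ (xs j.castSucc) (xs j.succ) := by
      rw [segment_eq_Icc (hac j).le]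
      exact hIsub j hxI
    have hge := (hJconc_x b hb).ge_on_segment ⟨ha0, ha1⟩ ⟨hc0, hc1⟩ hseg
    have h1 := (hcons j).1
    have h2 := (hcons j).2
    have hmin : -(lu j - ll j) - η ≤ min (J (xs j.castSucc) b) (J (xs j.succ) b) :=
      le_min (by linarith) (by linarith)
    have := hmin.trans hge
    linarith
end
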